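/- For every n ≥ 1 with odd part op(n) and 2-adic valuation k (so n = 2^k · op(n)), the monic integer polynomial \hat{t}(n,x) = 2T(n, x/2) factors as \hat{t}(n,x) = ∏_{d | op(n)} C(2^{k+1} d, x), where C(m,x) is the minimal polynomial of 2cos(π/m). -/

import Mathlib

set_option maxHeartbeats 1000000
set_option synthInstance.maxHeartbeats 100000

open Real Polynomial Complex IntermediateField

noncomputable def Spoly (P : Polynomial ℚ) : Polynomial ℚ :=
  ∑ i ∈ Finset.range (P.natDegree + 1),
    C (P.coeff i) * (X ^ (P.natDegree - i) * (X ^ 2 + 1) ^ i)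

lemma Spoly_aeval (P : Polynomial ℚ) (z : ℂ) (hz : z ≠ 0) :
    Polynomial.aeval z (Spoly P) = z ^ P.natDegree * Polynomial.aeval (z + z⁻¹) P := by
  rw [Spoly, map_sum, Polynomial.aeval_eq_sum_range (z + z⁻¹), Finset.mul_sum]
  refine Finset.sum_congr rfl fun i hi => ?_
  simp only [Finset.mem_range] at hi
  have hi' : i ≤ P.natDegree := by omega
  simp only [map_mul, map_pow, map_add, map_one, aeval_X, aeval_C]
  rw [Algebra.smul_def]
  have h1 : z ^ P.natDegree = z ^ (P.natDegree - i) * z ^ i := by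
    rw [← pow_add]; congr 1; omega
  have h2 : z ^ i * (z + z⁻¹) ^ i = (z ^ 2 + 1) ^ i := by
    rw [← mul_pow]; congr 1; field_simp
  calc (algebraMap ℚ ℂ) (P.coeff i) * (z ^ (P.natDegree - i) * (z ^ 2 + 1) ^ i)
      = (algebraMap ℚ ℂ) (P.coeff i) * (z ^ (P.natDegree - i) * (z ^ i * (z + z⁻¹) ^ i)) := by
        rw [h2]
    _ = z ^ P.natDegree * ((algebraMap ℚ ℂ) (P.coeff i) * (z + z⁻¹) ^ i) := by
        rw [h1]; ring

lemma Spoly_monic {P : Polynomial ℚ} (hP : P.Monic) :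
    (Spoly P).Monic ∧ (Spoly P).natDegree = 2 * P.natDegree := by
  set D := P.natDegree with hD
  have hsplit : Spoly P = (X ^ 2 + 1) ^ D +
      ∑ i ∈ Finset.range D, C (P.coeff i) * (X ^ (D - i) * (X ^ 2 + 1) ^ i) := by
    rw [Spoly, Finset.sum_range_succ, hP.coeff_natDegree]
    simp [add_comm]
    rfl
  have hm1 : (X ^ 2 + 1 : Polynomial ℚ).Monic := by
    simpa using monic_X_pow_add_C (a := (1:ℚ)) (n := 2) (by norm_num)
  have hmonic : ((X ^ 2 + 1 : Polynomial ℚ) ^ D).Monic := hm1.pow D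
  have hnd1 : (X ^ 2 + 1 : Polynomial ℚ).natDegree = 2 := by
    simpa using natDegree_X_pow_add_C (n := 2) (r := (1:ℚ))
  have hndmain : ((X ^ 2 + 1 : Polynomial ℚ) ^ D).natDegree = 2 * D := by
    rw [hm1.natDegree_pow, hnd1]; ring
  have hdegmain : ((X ^ 2 + 1 : Polynomial ℚ) ^ D).degree = (2 * D : ℕ) := by
    rw [degree_eq_natDegree hmonic.ne_zero, hndmain]
  have hrest : (∑ i ∈ Finset.range D,
      C (P.coeff i) * (X ^ (D - i) * (X ^ 2 + 1) ^ i)).degree < ((2 * D : ℕ) : WithBot ℕ) := by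
    apply lt_of_le_of_lt (degree_sum_le _ _)
    rw [Finset.sup_lt_iff (by exact_mod_cast WithBot.bot_lt_coe _)]
    intro i hi
    simp only [Finset.mem_range] at hi
    apply lt_of_le_of_lt (degree_mul_le _ _)
    calc (C (P.coeff i)).degree + (X ^ (D - i) * (X ^ 2 + 1) ^ i : Polynomial ℚ).degree
        ≤ 0 + (X ^ (D - i) * (X ^ 2 + 1) ^ i : Polynomial ℚ).degree := by
          exact add_le_add_left degree_C_le _
      _ ≤ 0 + ((D - i : ℕ) + ((2 : ℕ) * i : ℕ)) := by
          apply add_le_add_right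
          apply le_trans (degree_mul_le _ _)
          apply add_le_add
          · exact (degree_X_pow _).le
          · rw [degree_pow]
            calc (i : ℕ) • (X ^ 2 + 1 : Polynomial ℚ).degree
                = (i : ℕ) • ((2 : ℕ) : WithBot ℕ) := by
                  rw [degree_eq_natDegree hm1.ne_zero, hnd1]
              _ ≤ ((2 * i : ℕ) : WithBot ℕ) := by
                  rw [nsmul_eq_mul]
                  norm_cast
                  omega
      _ < ((2 * D : ℕ) : WithBot ℕ) := by
          rw [zero_add]
          norm_cast
          omega
  constructor
  · rw [hsplit]
    exact hmonic.add_of_left (hdegmain ▸ hrest)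
  · rw [hsplit, natDegree_add_eq_left_of_degree_lt (hdegmain ▸ hrest), hndmain]

noncomputable def Lq (m : ℕ) : Polynomial ℚ :=
  2 * (Polynomial.Chebyshev.T ℚ (m : ℤ)).comp (C 2⁻¹ * X)

lemma Lq_zero : Lq 0 = 2 := by
  simp [Lq, Polynomial.Chebyshev.T_zero]

lemma Lq_one : Lq 1 = X := by
  simp only [Lq, Nat.cast_one, Polynomial.Chebyshev.T_one, X_comp]
  rw [(map_ofNat C 2).symm, ← mul_assoc, ← C_mul]
  norm_num

lemma Lq_add_two (m : ℕ) : Lq (m + 2) = X * Lq (m + 1) - Lq m := by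
  have h : ((m + 2 : ℕ) : ℤ) = (m : ℤ) + 2 := by push_cast; ring
  rw [Lq, h, Polynomial.Chebyshev.T_add_two]
  rw [sub_comp, mul_comp, mul_comp, ofNat_comp, X_comp]
  rw [Lq, Lq, show ((m+1:ℕ):ℤ) = (m:ℤ)+1 from by push_cast; ring]
  have h4 : (4 : Polynomial ℚ) * C 2⁻¹ = 2 := by
    rw [(map_ofNat C 4).symm, ← C_mul, show (4 : ℚ) * 2⁻¹ = 2 by norm_num]
    exact map_ofNat C 2
  linear_combination (X * ((Polynomial.Chebyshev.T ℚ ((m:ℤ)+1)).comp (C 2⁻¹ * X))) * h4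

lemma Lq_natDegree_le (m : ℕ) : (Lq m).natDegree ≤ m ∧ (1 ≤ m → (Lq m).Monic ∧ (Lq m).natDegree = m) := by
  induction m using Nat.strong_induction_on with
  | _ m ih =>
    match m with
    | 0 => refine ⟨by simp [Lq_zero], by omega⟩
    | 1 => refine ⟨by simp [Lq_one], fun _ => ⟨Lq_one ▸ monic_X, by simp [Lq_one]⟩⟩
    | (m+2) =>
      obtain ⟨h1, h2⟩ := ih (m+1) (by omega)
      obtain ⟨hmon, hdeg⟩ := h2 (by omega)
      obtain ⟨h0, -⟩ := ih m (by omega)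
      have hXm : (X * Lq (m+1)).Monic := monic_X.mul hmon
      have hXdeg : (X * Lq (m+1)).natDegree = m + 2 := by
        rw [monic_X.natDegree_mul hmon, natDegree_X, hdeg]
        omega
      have hlt : (Lq m).degree < (X * Lq (m+1)).degree := by
        apply lt_of_le_of_lt (degree_le_natDegree.trans (by exact_mod_cast Nat.cast_le.2 h0))
        rw [degree_eq_natDegree hXm.ne_zero, hXdeg]
        exact_mod_cast by omega
      have hmon2 : (Lq (m+2)).Monic := by
        rw [Lq_add_two]; exact hXm.sub_of_left hlt
      have hdeg2 : (Lq (m+2)).natDegree = m + 2 := by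
        rw [Lq_add_two, sub_eq_add_neg, natDegree_add_eq_left_of_degree_lt
          (by rwa [degree_neg]), hXdeg]
      exact ⟨le_of_eq hdeg2, fun _ => ⟨hmon2, hdeg2⟩⟩

noncomputable def RIF : IntermediateField ℚ ℂ :=
  Subfield.toIntermediateField Complex.ofRealHom.fieldRange (by
    intro q; exact ⟨(q:ℝ), by simp⟩)

noncomputable abbrev ofRealQ : ℝ →ₐ[ℚ] ℂ := Complex.ofRealAm.restrictScalars ℚ

lemma ofRealQ_inj : Function.Injective ofRealQ := fun a b h => by simpa using h

lemma key (N : ℕ) (hN : 3 ≤ N) :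
    IsIntegral ℚ (2 * Real.cos (2 * π / N)) ∧
    Spoly (minpoly ℚ (2 * Real.cos (2 * π / N))) = cyclotomic N ℚ ∧
    2 * (minpoly ℚ (2 * Real.cos (2 * π / N))).natDegree = N.totient := by
  have h0 : (N:ℕ) ≠ 0 := by omega
  set α : ℝ := 2 * Real.cos (2 * π / N) with hα
  set ζ : ℂ := Complex.exp (2 * Real.pi * Complex.I / N) with hζdef
  have hζ : IsPrimitiveRoot ζ N := Complex.isPrimitiveRoot_exp N h0
  have hintζ : IsIntegral ℚ ζ := (hζ.isIntegral (by omega)).tower_top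
  have hζne : ζ ≠ 0 := hζ.ne_zero h0
  have hαζ : (α : ℂ) = ζ + ζ⁻¹ := by
    rw [hα, hζdef, ← Complex.exp_neg]
    push_cast
    have h1 : (2*(π:ℂ)*I/(N:ℂ)) = (2*(π:ℂ)/(N:ℂ)) * I := by ring
    rw [h1, Complex.cos]
    ring
  have hintαC : IsIntegral ℚ (α : ℂ) := by rw [hαζ]; exact hintζ.add hintζ.inv
  have hintα : IsIntegral ℚ α := (isIntegral_algHom_iff ofRealQ ofRealQ_inj).mp hintαC
  have hminpoly_eq : minpoly ℚ (α:ℂ) = minpoly ℚ α := minpoly.algHom_eq ofRealQ ofRealQ_inj α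
  -- part 1 : degree
  have hdeg : 2 * (minpoly ℚ α).natDegree = N.totient := by
    set F : IntermediateField ℚ ℂ := ℚ⟮(α:ℂ)⟯ with hF
    have hFR : F ≤ RIF := by rw [hF, adjoin_simple_le_iff]; exact ⟨α, rfl⟩
    have hζF : ζ ∉ F := by
      intro h
      obtain ⟨r, hr⟩ := hFR h
      rw [show Complex.ofRealHom r = (r:ℂ) from rfl] at hr
      have : r^N = 1 := by exact_mod_cast hr ▸ hζ.pow_eq_one
      have hr2 : r^2 = 1 := by
        rcases pow_eq_one_iff_cases.mp this with h|h|h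
        · omega
        · rw [h]; ring
        · rw [h.1]; ring
      have h2 : ζ^2 = 1 := by rw [← hr]; exact_mod_cast hr2
      have := Nat.le_of_dvd (by norm_num) (hζ.dvd_of_pow_eq_one 2 h2)
      omega
    set K : IntermediateField F ℂ := F⟮ζ⟯ with hK
    have hintζF : IsIntegral F ζ := hintζ.tower_top
    have hfrk : Module.finrank F K = (minpoly F ζ).natDegree :=
      IntermediateField.adjoin.finrank hintζF
    set gα : F := IntermediateField.AdjoinSimple.gen ℚ (α:ℂ) with hgα
    set quad : Polynomial F := X^2 + (-(C gα) * X + 1) with hquad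
    have hlt : (-(C gα) * X + 1).degree < (X^2 : Polynomial F).degree := by
      simp only [degree_X_pow]
      apply lt_of_le_of_lt (degree_add_le _ _)
      apply max_lt
      · apply lt_of_le_of_lt (degree_mul_le _ _)
        calc (-(C gα)).degree + (X : Polynomial F).degree ≤ 0 + 1 :=
              add_le_add (le_trans (degree_neg (C gα)).le degree_C_le) degree_X.le
          _ < 2 := by norm_num
      · exact lt_of_le_of_lt degree_one_le (by norm_num)
    have hquadmonic : quad.Monic := Polynomial.Monic.add_of_left (monic_X_pow 2) hlt
    have hquaddeg : quad.natDegree = 2 := by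
      have := Polynomial.degree_add_eq_left_of_degree_lt hlt
      rw [degree_X_pow] at this
      exact natDegree_eq_of_degree_eq_some this
    have hquadroot : Polynomial.aeval ζ quad = 0 := by
      rw [hquad]
      simp only [map_add, map_neg, map_mul, map_pow, map_one, aeval_X, aeval_C]
      rw [IntermediateField.AdjoinSimple.algebraMap_gen, hαζ]
      field_simp
      ring
    have hdvd : minpoly F ζ ∣ quad := minpoly.dvd F ζ hquadroot
    have hle : (minpoly F ζ).natDegree ≤ 2 := by
      have := Polynomial.natDegree_le_of_dvd hdvd hquadmonic.ne_zero
      omega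
    have hne1 : (minpoly F ζ).natDegree ≠ 1 := by
      intro h1
      have hmonic := minpoly.monic hintζF
      have heq := Polynomial.eq_X_add_C_of_natDegree_le_one (le_of_eq h1)
      rw [show (minpoly F ζ).coeff 1 = 1 from by
        rw [← h1]; exact hmonic.coeff_natDegree, map_one, one_mul] at heq
      have hroot := minpoly.aeval F ζ
      rw [heq] at hroot
      simp only [map_add, aeval_X, aeval_C] at hroot
      apply hζF
      have : ζ = algebraMap F ℂ (-(minpoly F ζ).coeff 0) := by
        rw [map_neg]; linear_combination hroot
      rw [this]
      exact (-(minpoly F ζ).coeff 0).2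
    have hpos : 0 < (minpoly F ζ).natDegree := minpoly.natDegree_pos hintζF
    have hdeg2 : Module.finrank F K = 2 := by omega
    have hfinF : Module.finrank ℚ F = (minpoly ℚ α).natDegree := by
      rw [IntermediateField.adjoin.finrank hintαC]
      congr 1
    have hζmem : ζ ∈ IntermediateField.adjoin ℚ ({(α:ℂ)} ∪ {ζ}) :=
      IntermediateField.subset_adjoin ℚ _ (by simp)
    have hKtop : K.restrictScalars ℚ = ℚ⟮ζ⟯ := by
      rw [hK]
      erw [IntermediateField.adjoin_adjoin_left]
      apply le_antisymm
      · rw [IntermediateField.adjoin_le_iff]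
        rintro x (hx | hx) <;> simp only [Set.mem_singleton_iff] at hx <;> rw [hx]
        · rw [hαζ]
          exact add_mem (IntermediateField.mem_adjoin_simple_self ℚ ζ)
            (inv_mem (IntermediateField.mem_adjoin_simple_self ℚ ζ))
        · exact IntermediateField.mem_adjoin_simple_self ℚ ζ
      · rw [IntermediateField.adjoin_simple_le_iff]
        exact hζmem
    have hrkK : Module.finrank ℚ K = N.totient := by
      have h1 : Module.finrank ℚ (K.restrictScalars ℚ) = N.totient := by
        rw [hKtop, IntermediateField.adjoin.finrank hintζ,
          ← cyclotomic_eq_minpoly_rat hζ (by omega), natDegree_cyclotomic]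
      exact h1
    have hmul : Module.finrank ℚ F * Module.finrank F K = Module.finrank ℚ K :=
      Module.finrank_mul_finrank ℚ F K
    rw [hfinF, hdeg2] at hmul
    omega
  refine ⟨hintα, ?_, hdeg⟩
  -- part 2 : Spoly = cyclotomic
  set P := minpoly ℚ α with hP
  have hPmonic : P.Monic := minpoly.monic hintα
  obtain ⟨hSm, hSd⟩ := Spoly_monic hPmonic
  have hroot : Polynomial.aeval ζ (Spoly P) = 0 := by
    rw [Spoly_aeval P ζ hζne, ← hαζ,
      show Polynomial.aeval ((α:ℝ):ℂ) P = ofRealQ (Polynomial.aeval α P) from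
        Polynomial.aeval_algHom_apply ofRealQ α P,
      minpoly.aeval, map_zero, mul_zero]
  have hcdvd : cyclotomic N ℚ ∣ Spoly P := by
    rw [cyclotomic_eq_minpoly_rat hζ (by omega)]
    exact minpoly.dvd ℚ ζ hroot
  have := Polynomial.eq_of_monic_of_dvd_of_natDegree_le (cyclotomic.monic N ℚ) hSm hcdvd
    (by rw [natDegree_cyclotomic, hSd]; omega)
  exact this

/-- For n ≥ 1 with n = 2^k·op(n), op(n) odd, the monic integer polynomial
t̂(n,x) = 2T(n,x/2) factors as ∏_{d | op(n)} C(2^{k+1}d, x), where C(m,x) is the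
minimal polynomial of 2cos(π/m). -/
theorem that_factorization (n : ℕ) (hn : 1 ≤ n) :
    (2 : Polynomial ℝ) * (Polynomial.Chebyshev.T ℝ (n : ℤ)).comp
        (Polynomial.C (2 : ℝ)⁻¹ * Polynomial.X) =
      ∏ d ∈ (n / 2 ^ (n.factorization 2)).divisors,
        (minpoly ℚ ((2 : ℝ) * Real.cos (π / (2 ^ (n.factorization 2 + 1) * d)))).map
          (algebraMap ℚ ℝ) := by
  have hn0 : n ≠ 0 := by omega
  set k := n.factorization 2 with hk
  set q := n / 2 ^ k with hqdef
  have hnq : 2 ^ k * q = n := Nat.ordProj_mul_ordCompl_eq_self n 2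
  have hqodd : ¬ 2 ∣ q := Nat.not_dvd_ordCompl Nat.prime_two hn0
  have hqpos : 0 < q := Nat.ordCompl_pos 2 hn0
  -- definitions
  set Nd : ℕ → ℕ := fun d => 2 ^ (k + 2) * d with hNd
  set α : ℕ → ℝ := fun d => 2 * Real.cos (2 * π / (Nd d : ℝ)) with hαdef
  -- angle rewriting
  have hangle : ∀ d : ℕ, d ≠ 0 →
      (2 : ℝ) * Real.cos (π / (2 ^ (k + 1) * (d:ℕ))) = α d := by
    intro d hd
    have hd' : (d : ℝ) ≠ 0 := Nat.cast_ne_zero.mpr hd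
    congr 1
    congr 1
    have h1 : ((2:ℝ)) ^ (k+1) * (d:ℝ) ≠ 0 := by positivity
    have h2 : ((Nd d : ℕ) : ℝ) ≠ 0 := by
      have : (0:ℕ) < Nd d := by positivity
      exact Nat.cast_ne_zero.mpr this.ne'
    rw [div_eq_div_iff h1 h2, hNd]
    push_cast
    ring
  -- replace RHS
  rw [show ∏ d ∈ q.divisors,
        (minpoly ℚ ((2:ℝ) * Real.cos (π / (2 ^ (k + 1) * d)))).map (algebraMap ℚ ℝ) =
      ∏ d ∈ q.divisors, (minpoly ℚ (α d)).map (algebraMap ℚ ℝ) from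
    Finset.prod_congr rfl fun d hd => by
      rw [hangle d (Nat.pos_of_mem_divisors hd).ne']]
  -- LHS as map of Lq
  have hLmap : (Lq n).map (algebraMap ℚ ℝ) =
      (2 : Polynomial ℝ) * (Polynomial.Chebyshev.T ℝ (n : ℤ)).comp (C (2:ℝ)⁻¹ * X) := by
    rw [Lq, Polynomial.map_mul, Polynomial.map_comp, Polynomial.Chebyshev.map_T,
      Polynomial.map_mul, map_C, Polynomial.map_X, Polynomial.map_ofNat]
    norm_num
  rw [← hLmap, ← Polynomial.map_prod]
  congr 1
  -- now pure ℚ[X] statement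
  have hN3 : ∀ d ∈ q.divisors, 3 ≤ Nd d := by
    intro d hd
    have := Nat.pos_of_mem_divisors hd
    have : 4 ≤ 2 ^ (k+2) := by
      calc 4 = 2^2 := by norm_num
      _ ≤ 2^(k+2) := Nat.pow_le_pow_right (by norm_num) (by omega)
    calc 3 ≤ 4 * 1 := by norm_num
    _ ≤ 2^(k+2) * d := Nat.mul_le_mul this (by omega)
  -- divisibility of each minpoly
  have hdvd : ∀ d ∈ q.divisors, minpoly ℚ (α d) ∣ Lq n := by
    intro d hd
    have hdpos := Nat.pos_of_mem_divisors hd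
    obtain ⟨e, he⟩ := (Nat.mem_divisors.mp hd).1
    have heodd : ¬ 2 ∣ e := fun ⟨c, hc⟩ => hqodd ⟨d * c, by rw [he, hc]; ring⟩
    apply minpoly.dvd ℚ (α d)
    rw [Polynomial.aeval_def, Polynomial.eval₂_eq_eval_map, hLmap]
    simp only [eval_mul, eval_comp, eval_ofNat, eval_C, eval_X]
    have : (2:ℝ)⁻¹ * α d = Real.cos (2 * π / (Nd d : ℝ)) := by
      rw [hαdef]; ring
    rw [this, Polynomial.Chebyshev.T_real_cos]
    have hcos : Real.cos ((n : ℤ) * (2 * π / (Nd d : ℝ))) = 0 := by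
      rw [Real.cos_eq_zero_iff]
      obtain ⟨j, hj⟩ : ∃ j : ℕ, e = 2 * j + 1 := by
        rcases Nat.even_or_odd e with h | h
        · exact absurd h.two_dvd heodd
        · exact ⟨e / 2, by omega⟩
      refine ⟨j, ?_⟩
      have hNdne : ((Nd d : ℕ) : ℝ) ≠ 0 := by
        have := hN3 d hd; positivity
      subst hj
      have hnat : 4 * n = (2 * j + 1) * Nd d := by rw [← hnq, he, hNd]; ring
      have hcast : ((4 * n : ℕ) : ℝ) = (((2 * j + 1) * Nd d : ℕ) : ℝ) := by
        exact_mod_cast congrArg (Nat.cast : ℕ → ℝ) hnat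
      push_cast at hcast ⊢
      field_simp
      linear_combination hcast
    rw [hcos, mul_zero]
  -- facts from key
  have hint : ∀ d ∈ q.divisors, IsIntegral ℚ (α d) := fun d hd => (key (Nd d) (hN3 d hd)).1
  have hSpoly : ∀ d ∈ q.divisors, Spoly (minpoly ℚ (α d)) = cyclotomic (Nd d) ℚ :=
    fun d hd => (key (Nd d) (hN3 d hd)).2.1
  have hdeg : ∀ d ∈ q.divisors, 2 * (minpoly ℚ (α d)).natDegree = (Nd d).totient :=
    fun d hd => (key (Nd d) (hN3 d hd)).2.2
  -- injectivity
  have hinj : ∀ d1 ∈ q.divisors, ∀ d2 ∈ q.divisors,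
      minpoly ℚ (α d1) = minpoly ℚ (α d2) → d1 = d2 := by
    intro d1 h1 d2 h2 heq
    have hc : cyclotomic (Nd d1) ℚ = cyclotomic (Nd d2) ℚ := by
      rw [← hSpoly d1 h1, ← hSpoly d2 h2, heq]
    have hN : Nd d1 = Nd d2 := Polynomial.cyclotomic_injective hc
    rw [hNd] at hN
    simp only [] at hN
    exact Nat.eq_of_mul_eq_mul_left (by positivity) hN
  -- pairwise coprime
  have hcop : (q.divisors : Set ℕ).Pairwise (Function.onFun IsCoprime fun d => minpoly ℚ (α d)) := by
    intro d1 h1 d2 h2 hne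
    simp only [Function.onFun] at *
    have hirr1 := minpoly.irreducible (hint d1 (by exact_mod_cast h1))
    have hirr2 := minpoly.irreducible (hint d2 (by exact_mod_cast h2))
    rw [Irreducible.coprime_iff_not_dvd hirr1]
    intro hdvd'
    have hassoc := Irreducible.associated_of_dvd hirr1 hirr2 hdvd'
    have heq := Polynomial.eq_of_monic_of_associated
      (minpoly.monic (hint d1 (by exact_mod_cast h1)))
      (minpoly.monic (hint d2 (by exact_mod_cast h2))) hassoc
    exact hne (hinj d1 (by exact_mod_cast h1) d2 (by exact_mod_cast h2) heq)
  have hproddvd : (∏ d ∈ q.divisors, minpoly ℚ (α d)) ∣ Lq n :=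
    Finset.prod_dvd_of_coprime hcop hdvd
  have hprodmonic : (∏ d ∈ q.divisors, minpoly ℚ (α d)).Monic :=
    monic_prod_of_monic _ _ fun d hd => minpoly.monic (hint d hd)
  obtain ⟨hLmonic, hLdeg⟩ := (Lq_natDegree_le n).2 hn
  have hproddeg : (∏ d ∈ q.divisors, minpoly ℚ (α d)).natDegree = n := by
    rw [Polynomial.natDegree_prod _ _ fun d hd => (minpoly.monic (hint d hd)).ne_zero]
    have h2 : 2 * ∑ d ∈ q.divisors, (minpoly ℚ (α d)).natDegree = 2 * n := by
      rw [Finset.mul_sum]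
      rw [Finset.sum_congr rfl hdeg]
      have htot : ∀ d ∈ q.divisors, (Nd d).totient = 2^(k+1) * d.totient := by
        intro d hd
        have hd2 : ¬ 2 ∣ d := fun hdd => hqodd (hdd.trans (Nat.mem_divisors.mp hd).1)
        have hco : Nat.Coprime (2 ^ (k+2)) d :=
          Nat.Coprime.pow_left _ (Nat.Prime.coprime_iff_not_dvd Nat.prime_two |>.mpr hd2)
        rw [hNd]
        simp only []
        rw [Nat.totient_mul hco, Nat.totient_prime_pow Nat.prime_two (by omega)]
        norm_num
      rw [Finset.sum_congr rfl htot, ← Finset.mul_sum, Nat.sum_totient, ← hnq]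
      ring
    omega
  exact (Polynomial.eq_of_monic_of_dvd_of_natDegree_le hprodmonic hLmonic hproddvd
    (by rw [hproddeg, hLdeg]))
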